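/- Sylvester's identity: Let $q, x$ be complex numbers with $|q| < 1$ and such that $(xq^{k+1};q)_\infty \ne 0$ for all $k \ge 0$. Then $\sum_{k=0}^{\infty} \frac{(-1)^k x^k q^{k(3k+1)/2} (1 - xq^{2k+1})}{(q;q)_k \, (xq^{k+1};q)_\infty} = 1$ (the series converges since $|q|<1$). -/

import Mathlib

set_option autoImplicit false

/-- The q-shifted factorial `(a;q)_n = ∏_{j=0}^{n-1} (1 - a q^j)`. -/
noncomputable def qPoch (q a : ℂ) (n : ℕ) : ℂ := ∏ j ∈ Finset.range n, (1 - a * q ^ j)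

/-- The infinite q-shifted factorial `(a;q)_∞ = ∏_{j=0}^{∞} (1 - a q^j)`. -/
noncomputable def qPochInf (q a : ℂ) : ℂ := ∏' j : ℕ, (1 - a * q ^ j)

namespace Sylvester

open Filter Finset

def sylE (k : ℕ) : ℕ := k * (3 * k + 1) / 2

lemma two_sylE (k : ℕ) : 2 * sylE k = k * (3 * k + 1) := by
  have h2 : 2 ∣ k * (3 * k + 1) := by
    rcases Nat.even_or_odd k with ⟨m, hm⟩ | ⟨m, hm⟩
    · exact ⟨m * (3 * k + 1), by rw [hm]; ring⟩
    · exact ⟨k * (3 * m + 2), by rw [hm]; ring⟩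
  exact Nat.mul_div_cancel' h2

lemma sylE_succ (k : ℕ) : sylE (k + 1) = sylE k + (3 * k + 2) := by
  have h1 := two_sylE k
  have h2 := two_sylE (k + 1)
  have h3 : (k + 1) * (3 * (k + 1) + 1) = k * (3 * k + 1) + 2 * (3 * k + 2) := by ring
  omega

lemma sq_le_sylE (k : ℕ) : k * k ≤ sylE k := by
  have h1 := two_sylE k
  have h3 : k * (3 * k + 1) = 3 * (k * k) + k := by ring
  omega

noncomputable def C (q y : ℂ) (k : ℕ) : ℂ :=
  (-1) ^ k * y ^ k * q ^ sylE k * (1 - y * q ^ (2 * k + 1)) * qPoch q (y * q) k / qPoch q q k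

lemma qPoch_zero (q a : ℂ) : qPoch q a 0 = 1 := by simp [qPoch]

lemma qPoch_succ (q a : ℂ) (n : ℕ) :
    qPoch q a (n + 1) = qPoch q a n * (1 - a * q ^ n) := Finset.prod_range_succ _ _

lemma qPoch_succ' (q a : ℂ) (n : ℕ) :
    qPoch q a (n + 1) = (1 - a) * qPoch q (a * q) n := by
  induction n with
  | zero => simp [qPoch]
  | succ n ih => rw [qPoch_succ, ih, qPoch_succ q (a * q) n]; ring

lemma one_sub_pow_ne {q : ℂ} (hq : ‖q‖ < 1) (j : ℕ) : (1 : ℂ) - q ^ (j + 1) ≠ 0 := by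
  intro h
  have h1 : q ^ (j + 1) = 1 := by linear_combination -h
  have h2 : ‖q ^ (j + 1)‖ = 1 := by rw [h1, norm_one]
  rw [norm_pow] at h2
  have h3 : ‖q‖ ^ (j + 1) ≤ ‖q‖ := pow_le_of_le_one (norm_nonneg q) hq.le (Nat.succ_ne_zero j)
  linarith

lemma qPochq_ne {q : ℂ} (hq : ‖q‖ < 1) (n : ℕ) : qPoch q q n ≠ 0 := by
  rw [qPoch, Finset.prod_ne_zero_iff]
  intro j _
  have h := one_sub_pow_ne hq j
  rwa [pow_succ'] at h

lemma norm_qPoch_le {q : ℂ} (hq : ‖q‖ ≤ 1) (a : ℂ) (n : ℕ) :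
    ‖qPoch q a n‖ ≤ (1 + ‖a‖) ^ n := by
  rw [qPoch, norm_prod]
  calc ∏ j ∈ Finset.range n, ‖1 - a * q ^ j‖
      ≤ ∏ _j ∈ Finset.range n, (1 + ‖a‖) := by
        apply Finset.prod_le_prod (fun j _ => norm_nonneg _)
        intro j _
        calc ‖1 - a * q ^ j‖ ≤ ‖(1 : ℂ)‖ + ‖a * q ^ j‖ := norm_sub_le _ _
          _ = 1 + ‖a‖ * ‖q‖ ^ j := by rw [norm_one, norm_mul, norm_pow]
          _ ≤ 1 + ‖a‖ * 1 := by
              gcongr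
              exact pow_le_one₀ (norm_nonneg q) hq
          _ = 1 + ‖a‖ := by ring
    _ = (1 + ‖a‖) ^ n := by rw [Finset.prod_const, Finset.card_range]

lemma le_norm_qPochq {q : ℂ} (hq : ‖q‖ < 1) (n : ℕ) :
    (1 - ‖q‖) ^ n ≤ ‖qPoch q q n‖ := by
  rw [qPoch, norm_prod]
  calc (1 - ‖q‖) ^ n = ∏ _j ∈ Finset.range n, (1 - ‖q‖) := by
        rw [Finset.prod_const, Finset.card_range]
    _ ≤ ∏ j ∈ Finset.range n, ‖1 - q * q ^ j‖ := by
        apply Finset.prod_le_prod (fun j _ => by linarith)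
        intro j _
        have h1 : ‖q * q ^ j‖ ≤ ‖q‖ := by
          rw [norm_mul, norm_pow]
          exact mul_le_of_le_one_right (norm_nonneg q) (pow_le_one₀ (norm_nonneg q) hq.le)
        calc 1 - ‖q‖ ≤ 1 - ‖q * q ^ j‖ := by linarith
          _ = ‖(1 : ℂ)‖ - ‖q * q ^ j‖ := by rw [norm_one]
          _ ≤ ‖1 - q * q ^ j‖ := norm_sub_norm_le _ _

/-- master numerator bound -/
lemma norm_C_le_aux {q : ℂ} (hq : ‖q‖ < 1) {R : ℝ} (hR : 1 ≤ R) {y : ℂ} (hy : ‖y‖ ≤ R)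
    (k : ℕ) :
    ‖C q y k‖ ≤ ‖y‖ ^ k * ((1 + R) * (1 + R) ^ k * (‖q‖ ^ k) ^ k / (1 - ‖q‖) ^ k) := by
  have ht0 : (0 : ℝ) ≤ ‖q‖ := norm_nonneg q
  have h1t : (0 : ℝ) < 1 - ‖q‖ := by linarith
  have hR0 : (0 : ℝ) < 1 + R := by linarith
  rw [C, norm_div]
  have hnum : ‖(-1 : ℂ) ^ k * y ^ k * q ^ sylE k * (1 - y * q ^ (2 * k + 1)) * qPoch q (y * q) k‖
      ≤ ‖y‖ ^ k * ((1 + R) * (1 + R) ^ k * (‖q‖ ^ k) ^ k) := by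
    rw [norm_mul, norm_mul, norm_mul, norm_mul, norm_pow, norm_pow, norm_pow, norm_neg,
      norm_one, one_pow, one_mul]
    have hb1 : ‖q‖ ^ sylE k ≤ (‖q‖ ^ k) ^ k := by
      rw [← pow_mul]
      exact pow_le_pow_of_le_one ht0 hq.le (sq_le_sylE k)
    have hb2 : ‖1 - y * q ^ (2 * k + 1)‖ ≤ 1 + R := by
      calc ‖1 - y * q ^ (2 * k + 1)‖ ≤ ‖(1 : ℂ)‖ + ‖y * q ^ (2 * k + 1)‖ := norm_sub_le _ _
        _ = 1 + ‖y‖ * ‖q‖ ^ (2 * k + 1) := by rw [norm_one, norm_mul, norm_pow]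
        _ ≤ 1 + R * 1 := by
            gcongr
            exact pow_le_one₀ ht0 hq.le
        _ = 1 + R := by ring
    have hb3 : ‖qPoch q (y * q) k‖ ≤ (1 + R) ^ k := by
      calc ‖qPoch q (y * q) k‖ ≤ (1 + ‖y * q‖) ^ k := norm_qPoch_le hq.le _ k
        _ ≤ (1 + R) ^ k := by
            gcongr
            rw [norm_mul]
            exact le_trans (mul_le_of_le_one_right (norm_nonneg y) hq.le) hy
    calc ‖y‖ ^ k * ‖q‖ ^ sylE k * ‖1 - y * q ^ (2 * k + 1)‖ * ‖qPoch q (y * q) k‖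
        ≤ ‖y‖ ^ k * (‖q‖ ^ k) ^ k * (1 + R) * (1 + R) ^ k := by
          gcongr <;> positivity
      _ = ‖y‖ ^ k * ((1 + R) * (1 + R) ^ k * (‖q‖ ^ k) ^ k) := by ring
  have hQ : (1 - ‖q‖) ^ k ≤ ‖qPoch q q k‖ := le_norm_qPochq hq k
  calc ‖(-1 : ℂ) ^ k * y ^ k * q ^ sylE k * (1 - y * q ^ (2 * k + 1)) * qPoch q (y * q) k‖ /
        ‖qPoch q q k‖
      ≤ (‖y‖ ^ k * ((1 + R) * (1 + R) ^ k * (‖q‖ ^ k) ^ k)) / (1 - ‖q‖) ^ k := by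
        apply div_le_div₀ (by positivity) hnum (by positivity) hQ
    _ = ‖y‖ ^ k * ((1 + R) * (1 + R) ^ k * (‖q‖ ^ k) ^ k / (1 - ‖q‖) ^ k) := by ring

noncomputable def g (R t : ℝ) (k : ℕ) : ℝ := (1 + R) * ((R * (1 + R) / (1 - t)) * t ^ k) ^ k

lemma g_nonneg {R t : ℝ} (hR : 1 ≤ R) (ht0 : 0 ≤ t) (ht1 : t < 1) (k : ℕ) : 0 ≤ g R t k := by
  have h1t : (0 : ℝ) < 1 - t := by linarith
  have : (0:ℝ) ≤ R * (1 + R) / (1 - t) := by positivity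
  unfold g
  positivity

lemma g_eq {R t : ℝ} (ht1 : t < 1) (k : ℕ) :
    R ^ k * ((1 + R) * (1 + R) ^ k * (t ^ k) ^ k / (1 - t) ^ k) = g R t k := by
  have h1t : (1 : ℝ) - t ≠ 0 := by intro h; rw [sub_eq_zero] at h; exact absurd h.symm (by linarith)
  unfold g
  rw [mul_pow, div_pow, mul_pow]
  field_simp

lemma summable_g {R t : ℝ} (hR : 1 ≤ R) (ht0 : 0 ≤ t) (ht1 : t < 1) : Summable (g R t) := by
  have h1t : (0 : ℝ) < 1 - t := by linarith
  set s : ℝ := R * (1 + R) / (1 - t) with hs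
  have hs0 : 0 ≤ s := by positivity
  have htend : Filter.Tendsto (fun k : ℕ => s * t ^ k) Filter.atTop (nhds 0) := by
    have := (tendsto_pow_atTop_nhds_zero_of_lt_one ht0 ht1).const_mul s
    simpa using this
  have hev : ∀ᶠ k : ℕ in Filter.atTop, s * t ^ k ≤ 1 / 2 := by
    have := htend.eventually (eventually_le_nhds (by norm_num : (0:ℝ) < 1/2))
    exact this
  apply Summable.of_norm_bounded_eventually_nat (g := fun k => (1 + R) * (1 / 2) ^ k)
  · exact (summable_geometric_of_lt_one (by norm_num) (by norm_num)).mul_left _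
  · filter_upwards [hev] with k hk
    have hg0 := g_nonneg hR ht0 ht1 k
    rw [Real.norm_eq_abs, abs_of_nonneg hg0]
    unfold g
    gcongr

lemma norm_C_le {q : ℂ} (hq : ‖q‖ < 1) {R : ℝ} (hR : 1 ≤ R) {y : ℂ} (hy : ‖y‖ ≤ R)
    (k : ℕ) : ‖C q y k‖ ≤ g R ‖q‖ k := by
  calc ‖C q y k‖ ≤ ‖y‖ ^ k * ((1 + R) * (1 + R) ^ k * (‖q‖ ^ k) ^ k / (1 - ‖q‖) ^ k) :=
        norm_C_le_aux hq hR hy k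
    _ ≤ R ^ k * ((1 + R) * (1 + R) ^ k * (‖q‖ ^ k) ^ k / (1 - ‖q‖) ^ k) := by
        have h1t : (0 : ℝ) < 1 - ‖q‖ := by linarith
        gcongr
    _ = g R ‖q‖ k := g_eq hq k

lemma norm_C_succ_le {q : ℂ} (hq : ‖q‖ < 1) {R : ℝ} (hR : 1 ≤ R) {y : ℂ} (hy : ‖y‖ ≤ R)
    (k : ℕ) : ‖C q y (k + 1)‖ ≤ ‖y‖ * g R ‖q‖ (k + 1) := by
  have h1t : (0 : ℝ) < 1 - ‖q‖ := by linarith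
  set X : ℝ := (1 + R) * (1 + R) ^ (k + 1) * (‖q‖ ^ (k + 1)) ^ (k + 1) / (1 - ‖q‖) ^ (k + 1)
    with hX
  have hX0 : 0 ≤ X := by positivity
  calc ‖C q y (k + 1)‖ ≤ ‖y‖ ^ (k + 1) * X := norm_C_le_aux hq hR hy (k + 1)
    _ = ‖y‖ * (‖y‖ ^ k * X) := by ring
    _ ≤ ‖y‖ * (R ^ (k + 1) * X) := by
        gcongr
        calc ‖y‖ ^ k ≤ R ^ k := by gcongr
          _ ≤ R ^ (k + 1) := pow_le_pow_right₀ hR (by omega)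
    _ = ‖y‖ * g R ‖q‖ (k + 1) := by rw [g_eq hq]

lemma summable_C {q : ℂ} (hq : ‖q‖ < 1) (y : ℂ) : Summable (C q y) := by
  set R : ℝ := max 1 ‖y‖ with hR
  have hR1 : 1 ≤ R := le_max_left _ _
  have hyR : ‖y‖ ≤ R := le_max_right _ _
  exact Summable.of_norm_bounded (summable_g hR1 (norm_nonneg q) hq) (norm_C_le hq hR1 hyR)

noncomputable def B (q y : ℂ) (n : ℕ) : ℂ :=
  (-1) ^ (n + 1) * y ^ n * q ^ sylE n * (1 - q ^ n) * qPoch q (y * q) n / qPoch q q n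

lemma telescope {q : ℂ} (hq : ‖q‖ < 1) (y : ℂ) (n : ℕ) :
    ∑ k ∈ Finset.range n, (C q y k - (1 - y * q) * C q (y * q) k) = B q y n := by
  induction n with
  | zero => simp [B]
  | succ n ih =>
    rw [Finset.sum_range_succ, ih]
    have hQ := qPochq_ne hq n
    have hp : (1 : ℂ) - q * q ^ n ≠ 0 := by
      have := one_sub_pow_ne hq n; rwa [pow_succ'] at this
    have hb : (1 - y * q) * C q (y * q) n =
        (-1) ^ n * (y * q) ^ n * q ^ sylE n * (1 - (y * q) * q ^ (2 * n + 1)) *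
          qPoch q (y * q) (n + 1) / qPoch q q n := by
      rw [qPoch_succ' q (y * q) n]
      unfold C
      ring
    rw [hb]
    unfold B C
    rw [sylE_succ, pow_add, qPoch_succ q (y * q) n, qPoch_succ q q n]
    have hp2 : (1 : ℂ) - q ^ n * q ≠ 0 := by rwa [mul_comm] at hp
    field_simp
    ring

lemma norm_B_le {q : ℂ} (hq : ‖q‖ < 1) {R : ℝ} (hR : 1 ≤ R) {y : ℂ} (hy : ‖y‖ ≤ R) (n : ℕ) :
    ‖B q y n‖ ≤ 2 * ((R * (1 + R) / (1 - ‖q‖)) * ‖q‖ ^ n) ^ n := by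
  have ht0 : (0 : ℝ) ≤ ‖q‖ := norm_nonneg q
  have h1t : (0 : ℝ) < 1 - ‖q‖ := by linarith
  have hR0 : (0 : ℝ) < 1 + R := by linarith
  rw [B, norm_div]
  have hb1 : ‖q‖ ^ sylE n ≤ (‖q‖ ^ n) ^ n := by
    rw [← pow_mul]
    exact pow_le_pow_of_le_one ht0 hq.le (sq_le_sylE n)
  have hb2 : ‖1 - q ^ n‖ ≤ 2 := by
    calc ‖1 - q ^ n‖ ≤ ‖(1 : ℂ)‖ + ‖q ^ n‖ := norm_sub_le _ _
      _ = 1 + ‖q‖ ^ n := by rw [norm_one, norm_pow]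
      _ ≤ 1 + 1 := by
          have := pow_le_one₀ ht0 hq.le (n := n); linarith
      _ = 2 := by norm_num
  have hb3 : ‖qPoch q (y * q) n‖ ≤ (1 + R) ^ n := by
    calc ‖qPoch q (y * q) n‖ ≤ (1 + ‖y * q‖) ^ n := norm_qPoch_le hq.le _ n
      _ ≤ (1 + R) ^ n := by
          gcongr
          rw [norm_mul]
          exact le_trans (mul_le_of_le_one_right (norm_nonneg y) hq.le) hy
  have hnum : ‖(-1 : ℂ) ^ (n + 1) * y ^ n * q ^ sylE n * (1 - q ^ n) * qPoch q (y * q) n‖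
      ≤ R ^ n * (‖q‖ ^ n) ^ n * 2 * (1 + R) ^ n := by
    rw [norm_mul, norm_mul, norm_mul, norm_mul, norm_pow, norm_pow, norm_pow, norm_neg,
      norm_one, one_pow, one_mul]
    have hyn : ‖y‖ ^ n ≤ R ^ n := by gcongr
    gcongr <;> positivity
  have hQ : (1 - ‖q‖) ^ n ≤ ‖qPoch q q n‖ := le_norm_qPochq hq n
  refine (div_le_div₀ (by positivity) hnum (by positivity) hQ).trans_eq ?_
  rw [mul_pow, div_pow, mul_pow]
  field_simp

lemma tendsto_B {q : ℂ} (hq : ‖q‖ < 1) (y : ℂ) :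
    Filter.Tendsto (B q y) Filter.atTop (nhds 0) := by
  have ht0 : (0 : ℝ) ≤ ‖q‖ := norm_nonneg q
  have h1t : (0 : ℝ) < 1 - ‖q‖ := by linarith
  set R : ℝ := max 1 ‖y‖ with hR
  have hR1 : 1 ≤ R := le_max_left _ _
  have hyR : ‖y‖ ≤ R := le_max_right _ _
  set s : ℝ := R * (1 + R) / (1 - ‖q‖) with hs
  have hs0 : 0 ≤ s := by positivity
  have htend : Filter.Tendsto (fun k : ℕ => s * ‖q‖ ^ k) Filter.atTop (nhds 0) := by
    have := (tendsto_pow_atTop_nhds_zero_of_lt_one ht0 hq).const_mul s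
    simpa using this
  have hev : ∀ᶠ k : ℕ in Filter.atTop, s * ‖q‖ ^ k ≤ 1 / 2 :=
    htend.eventually (eventually_le_nhds (by norm_num : (0:ℝ) < 1/2))
  rw [tendsto_zero_iff_norm_tendsto_zero]
  apply squeeze_zero' (Filter.Eventually.of_forall fun n => norm_nonneg _)
  · filter_upwards [hev] with n hn
    calc ‖B q y n‖ ≤ 2 * (s * ‖q‖ ^ n) ^ n := norm_B_le hq hR1 hyR n
      _ ≤ 2 * (1 / 2) ^ n := by gcongr
  · have : Filter.Tendsto (fun n : ℕ => 2 * (1 / 2 : ℝ) ^ n) Filter.atTop (nhds 0) := by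
      have := (tendsto_pow_atTop_nhds_zero_of_lt_one (by norm_num : (0:ℝ) ≤ 1/2)
        (by norm_num)).const_mul (2 : ℝ)
      simpa using this
    exact this

lemma funEq {q : ℂ} (hq : ‖q‖ < 1) (y : ℂ) :
    ∑' k, C q y k = (1 - y * q) * ∑' k, C q (y * q) k := by
  have h1 := summable_C hq y
  have h2 := summable_C hq (y * q)
  have hs : HasSum (fun k => C q y k - (1 - y * q) * C q (y * q) k)
      ((∑' k, C q y k) - (1 - y * q) * ∑' k, C q (y * q) k) :=
    h1.hasSum.sub (h2.hasSum.mul_left _)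
  have ht := hs.tendsto_sum_nat
  have heq : (fun n => ∑ k ∈ Finset.range n, (C q y k - (1 - y * q) * C q (y * q) k)) = B q y :=
    funext fun n => telescope hq y n
  rw [heq] at ht
  have := tendsto_nhds_unique ht (tendsto_B hq y)
  exact sub_eq_zero.mp this

lemma iterEq {q : ℂ} (hq : ‖q‖ < 1) (x : ℂ) (n : ℕ) :
    ∑' k, C q x k = qPoch q (x * q) n * ∑' k, C q (x * q ^ n) k := by
  induction n with
  | zero => simp [qPoch_zero]
  | succ n ih =>
    rw [ih, funEq hq (x * q ^ n), qPoch_succ]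
    have harg : x * q ^ n * q = x * q ^ (n + 1) := by ring
    rw [harg]
    ring

lemma tprod_eq_zero {f : ℕ → ℂ} {i : ℕ} (h : f i = 0) : ∏' j, f j = 0 := by
  have hp : HasProd f 0 := by
    rw [HasProd]
    have hev : ∀ᶠ s : Finset ℕ in Filter.atTop, ∏ b ∈ s, f b = 0 := by
      filter_upwards [Filter.eventually_ge_atTop {i}] with s hs
      exact Finset.prod_eq_zero (hs (Finset.mem_singleton_self i)) h
    exact Filter.Tendsto.congr' (hev.mono fun s hs => hs.symm) tendsto_const_nhds
  exact hp.tprod_eq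

lemma summable_log {q : ℂ} (hq : ‖q‖ < 1) (a : ℂ) :
    Summable fun j : ℕ => Complex.log (1 - a * q ^ j) := by
  have ht0 : (0 : ℝ) ≤ ‖q‖ := norm_nonneg q
  have htend : Filter.Tendsto (fun j : ℕ => ‖a‖ * ‖q‖ ^ j) Filter.atTop (nhds 0) := by
    have := (tendsto_pow_atTop_nhds_zero_of_lt_one ht0 hq).const_mul ‖a‖
    simpa using this
  have hev : ∀ᶠ j : ℕ in Filter.atTop, ‖a‖ * ‖q‖ ^ j ≤ 1 / 2 :=
    htend.eventually (eventually_le_nhds (by norm_num : (0:ℝ) < 1/2))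
  apply Summable.of_norm_bounded_eventually_nat (g := fun j => 3 / 2 * (‖a‖ * ‖q‖ ^ j))
  · exact ((summable_geometric_of_lt_one ht0 hq).mul_left ‖a‖).mul_left (3 / 2)
  · filter_upwards [hev] with j hj
    have h1 : 1 - a * q ^ j = 1 + -(a * q ^ j) := by ring
    rw [h1]
    have h2 : ‖-(a * q ^ j)‖ ≤ 1 / 2 := by
      rw [norm_neg, norm_mul, norm_pow]; exact hj
    calc ‖Complex.log (1 + -(a * q ^ j))‖ ≤ 3 / 2 * ‖-(a * q ^ j)‖ :=
          Complex.norm_log_one_add_half_le_self h2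
      _ = 3 / 2 * (‖a‖ * ‖q‖ ^ j) := by rw [norm_neg, norm_mul, norm_pow]

lemma multipliable_aux {q a : ℂ} (hq : ‖q‖ < 1) (hne : ∀ j : ℕ, (1 : ℂ) - a * q ^ j ≠ 0) :
    Multipliable fun j : ℕ => 1 - a * q ^ j :=
  Complex.multipliable_of_summable_log (summable_log hq a)

lemma split {q x : ℂ} (hq : ‖q‖ < 1) (hne : ∀ j : ℕ, (1 : ℂ) - x * q * q ^ j ≠ 0) (k : ℕ) :
    qPoch q (x * q) k * qPochInf q (x * q ^ (k + 1)) = qPochInf q (x * q) := by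
  have hMk : Multipliable fun n : ℕ => 1 - x * q * q ^ (n + k) := by
    have hne' : ∀ j : ℕ, (1 : ℂ) - x * q ^ (k + 1) * q ^ j ≠ 0 := by
      intro j
      have h0 := hne (j + k)
      rwa [show (1 : ℂ) - x * q * q ^ (j + k) = 1 - x * q ^ (k + 1) * q ^ j from by ring] at h0
    exact (multipliable_aux hq hne').congr (fun n => by ring)
  have h := Multipliable.prod_mul_tprod_nat_mul' (f := fun j : ℕ => 1 - x * q * q ^ j) (k := k) hMk
  rw [qPoch, qPochInf, qPochInf, ← h]
  congr 1
  apply tprod_congr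
  intro i
  ring

lemma F_sub_one_bound {q : ℂ} (hq : ‖q‖ < 1) {R : ℝ} (hR : 1 ≤ R) {y : ℂ} (hy : ‖y‖ ≤ R) :
    ‖(∑' k, C q y k) - 1‖ ≤ ‖y‖ * (‖q‖ + ∑' k, g R ‖q‖ (k + 1)) := by
  have ht0 : (0 : ℝ) ≤ ‖q‖ := norm_nonneg q
  have h1 := summable_C hq y
  have hsum1 : Summable fun k => C q y (k + 1) := (summable_nat_add_iff 1).2 h1
  have hgs : Summable fun k => g R ‖q‖ (k + 1) :=
    (summable_nat_add_iff 1).2 (summable_g hR ht0 hq)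
  have hC0 : C q y 0 = 1 - y * q := by
    simp [C, sylE, qPoch_zero]
  rw [Summable.tsum_eq_zero_add h1, hC0]
  have hb : ‖∑' k, C q y (k + 1)‖ ≤ ‖y‖ * ∑' k, g R ‖q‖ (k + 1) := by
    have hns : Summable fun k => ‖C q y (k + 1)‖ := summable_norm_iff.mpr hsum1
    calc ‖∑' k, C q y (k + 1)‖ ≤ ∑' k, ‖C q y (k + 1)‖ := norm_tsum_le_tsum_norm hns
      _ ≤ ∑' k, ‖y‖ * g R ‖q‖ (k + 1) :=
          Summable.tsum_le_tsum (fun k => norm_C_succ_le hq hR hy k) hns (hgs.mul_left ‖y‖)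
      _ = ‖y‖ * ∑' k, g R ‖q‖ (k + 1) := tsum_mul_left
  calc ‖1 - y * q + (∑' k, C q y (k + 1)) - 1‖
      = ‖-(y * q) + ∑' k, C q y (k + 1)‖ := by congr 1; ring
    _ ≤ ‖-(y * q)‖ + ‖∑' k, C q y (k + 1)‖ := norm_add_le _ _
    _ ≤ ‖y‖ * ‖q‖ + ‖y‖ * ∑' k, g R ‖q‖ (k + 1) := by
        rw [norm_neg, norm_mul]
        exact add_le_add le_rfl hb
    _ = ‖y‖ * (‖q‖ + ∑' k, g R ‖q‖ (k + 1)) := by ring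

end Sylvester

open Sylvester Filter

/-- Sylvester's identity. -/
theorem sylvester_identity (q x : ℂ) (hq : ‖q‖ < 1)
    (hden : ∀ k : ℕ, qPochInf q (x * q ^ (k + 1)) ≠ 0) :
    ∑' k : ℕ,
      (-1 : ℂ) ^ k * x ^ k * q ^ (k * (3 * k + 1) / 2) * (1 - x * q ^ (2 * k + 1)) /
        (qPoch q q k * qPochInf q (x * q ^ (k + 1)))
    = 1 := by
  have hq' : ‖q‖ < 1 := by exact hq
  have ht0 : (0 : ℝ) ≤ ‖q‖ := norm_nonneg q
  -- all factors are nonzero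
  have hfac : ∀ j : ℕ, (1 : ℂ) - x * q * q ^ j ≠ 0 := by
    intro j h
    apply hden j
    rw [qPochInf]
    apply tprod_eq_zero (i := 0)
    rw [← h]
    ring
  have hsplit : ∀ k : ℕ, qPoch q (x * q) k * qPochInf q (x * q ^ (k + 1)) = qPochInf q (x * q) :=
    split hq' hfac
  have hqP_ne : ∀ k : ℕ, qPoch q (x * q) k ≠ 0 := by
    intro k
    rw [qPoch, Finset.prod_ne_zero_iff]
    exact fun j _ => hfac j
  have hPi_ne : qPochInf q (x * q) ≠ 0 := by
    have h0 := hden 0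
    rwa [show x * q ^ (0 + 1) = x * q from by ring] at h0
  -- the key identity : ∑' k, C q x k = (xq;q)_∞
  have hFx : (∑' k, C q x k) = qPochInf q (x * q) := by
    have hM : Multipliable fun j : ℕ => 1 - x * q * q ^ j := multipliable_aux hq' hfac
    have hlim1 : Tendsto (fun n => qPoch q (x * q) n) atTop (nhds (qPochInf q (x * q))) := by
      have := hM.hasProd.tendsto_prod_nat
      exact this
    set R : ℝ := max 1 ‖x‖ with hR
    have hR1 : 1 ≤ R := le_max_left _ _
    have hxR : ‖x‖ ≤ R := le_max_right _ _
    set Ctot : ℝ := ‖q‖ + ∑' k, g R ‖q‖ (k + 1) with hCtot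
    have hlim2 : Tendsto (fun n => ∑' k, C q (x * q ^ n) k) atTop (nhds 1) := by
      have hbound : ∀ n : ℕ, ‖(∑' k, C q (x * q ^ n) k) - 1‖ ≤ (‖x‖ * ‖q‖ ^ n) * Ctot := by
        intro n
        have hyR : ‖x * q ^ n‖ ≤ R := by
          rw [norm_mul, norm_pow]
          calc ‖x‖ * ‖q‖ ^ n ≤ ‖x‖ * 1 :=
                mul_le_mul_of_nonneg_left (pow_le_one₀ ht0 hq'.le) (norm_nonneg x)
            _ = ‖x‖ := mul_one _
            _ ≤ R := hxR
        have := F_sub_one_bound hq' hR1 hyR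
        rwa [norm_mul, norm_pow] at this
      have hzero : Tendsto (fun n : ℕ => (‖x‖ * ‖q‖ ^ n) * Ctot) atTop (nhds 0) := by
        have h1 : Tendsto (fun n : ℕ => ‖x‖ * ‖q‖ ^ n) atTop (nhds 0) := by
          have := (tendsto_pow_atTop_nhds_zero_of_lt_one ht0 hq').const_mul ‖x‖
          simpa using this
        have := h1.mul_const Ctot
        simpa using this
      have hdiff : Tendsto (fun n => (∑' k, C q (x * q ^ n) k) - 1) atTop (nhds 0) := by
        rw [tendsto_zero_iff_norm_tendsto_zero]
        exact squeeze_zero (fun n => norm_nonneg _) hbound hzero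
      have := hdiff.add_const 1
      simpa using this
    have hmul : Tendsto (fun n => qPoch q (x * q) n * ∑' k, C q (x * q ^ n) k) atTop
        (nhds (qPochInf q (x * q) * 1)) := hlim1.mul hlim2
    have heq : (fun n => qPoch q (x * q) n * ∑' k, C q (x * q ^ n) k) =
        fun _ => ∑' k, C q x k := funext fun n => (iterEq hq' x n).symm
    rw [heq] at hmul
    have := tendsto_nhds_unique hmul tendsto_const_nhds
    rw [← this, mul_one]
  have hterm : ∀ k : ℕ,
      (-1 : ℂ) ^ k * x ^ k * q ^ (k * (3 * k + 1) / 2) * (1 - x * q ^ (2 * k + 1)) /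
        (qPoch q q k * qPochInf q (x * q ^ (k + 1)))
      = C q x k / qPochInf q (x * q) := by
    intro k
    rw [← hsplit k, C, sylE]
    have hQ := qPochq_ne hq' k
    have hA := hqP_ne k
    have hP := hden k
    field_simp
  calc (∑' k : ℕ,
      (-1 : ℂ) ^ k * x ^ k * q ^ (k * (3 * k + 1) / 2) * (1 - x * q ^ (2 * k + 1)) /
        (qPoch q q k * qPochInf q (x * q ^ (k + 1))))
      = ∑' k : ℕ, C q x k / qPochInf q (x * q) := tsum_congr hterm
    _ = (∑' k : ℕ, C q x k) / qPochInf q (x * q) := tsum_div_const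
    _ = qPochInf q (x * q) / qPochInf q (x * q) := by rw [hFx]
    _ = 1 := div_self hPi_ne
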